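/- arXiv:2212.02866 — 4 statements merged into one kernel-verified Lean document; each statement's English description precedes it below -/
import Mathlib

section
/- Let K ⊂ ℝⁿ be a convex body with 0 in its interior and let a, b > 0. Then (2π)^{−n/2} ∫_{ℝⁿ} e^{−½ b ‖x‖_K²} e^{−½ a |x|²} dx = (1/|B₂ⁿ|) ∫_K b (b + a|x|²)^{−(n+2)/2} dx. -/
open MeasureTheory Real Set Filter MeasureTheory.Measure
open scoped ENNReal Pointwise

private lemma integrable_aux {b : ℝ} (hb : 0 < b) :
    Integrable (fun t : ℝ => b * t * exp (-(b * t ^ 2) / 2)) := by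
  have h1 : Integrable (fun t : ℝ => t ^ (1:ℝ) * exp (-(b/2) * t ^ 2)) :=
    integrable_rpow_mul_exp_neg_mul_sq (by positivity) (by norm_num)
  have := h1.const_mul b
  convert this using 2 with t
  rw [Real.rpow_one]
  ring_nf

private theorem ftc_aux (b : ℝ) (hb : 0 < b) (c : ℝ) :
    ∫ t in Ioi c, b * t * exp (-(b * t ^ 2) / 2) = exp (-(b * c ^ 2) / 2) := by
  have hderiv : ∀ t ∈ Ioi c, HasDerivAt (fun t : ℝ => -exp (-(b * t ^ 2) / 2))
      (b * t * exp (-(b * t ^ 2) / 2)) t := by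
    intro t _
    have h : HasDerivAt (fun t : ℝ => -(b * t ^ 2) / 2) (-(b * t)) t := by
      have := ((hasDerivAt_pow 2 t).const_mul b).neg.div_const 2
      exact this.congr_deriv (by push_cast; ring)
    have := (h.exp).neg
    exact this.congr_deriv (by ring)
  have hint : IntegrableOn (fun t => b * t * exp (-(b * t ^ 2) / 2)) (Ioi c) :=
    (integrable_aux hb).integrableOn
  have htend : Tendsto (fun t : ℝ => -exp (-(b * t ^ 2) / 2)) atTop (nhds 0) := by
    rw [show (0:ℝ) = -0 by ring]
    apply Filter.Tendsto.neg
    apply Real.tendsto_exp_atBot.comp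
    have : Tendsto (fun t : ℝ => -(b/2) * t ^ 2) atTop atBot := by
      have := (tendsto_neg_atBot_iff (f := fun t : ℝ => (b/2) * t ^ 2) (l := atTop)).mpr ?_
      · convert this using 2 with t; ring
      · exact (tendsto_const_mul_atTop_of_pos (by positivity)).mpr (tendsto_pow_atTop two_ne_zero)
    convert this using 2 with t
    ring
  have hcont : ContinuousOn (fun t : ℝ => -exp (-(b * t ^ 2) / 2)) (Ici c) :=
    (by fun_prop : Continuous fun t : ℝ => -exp (-(b * t ^ 2) / 2)).continuousOn
  have := integral_Ioi_of_hasDerivAt_of_tendsto (hcont c Set.self_mem_Ici) hderiv hint htend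
  rw [this]; ring

private theorem gamma_aux (n : ℕ) (c : ℝ) (hc : 0 < c) :
    ∫ t in Ioi (0:ℝ), t ^ (n+1) * exp (-(c * t ^ 2) / 2) =
      (c/2) ^ (-((n:ℝ) + 2)/2) * (1/2) * Gamma (((n:ℝ) + 2)/2) := by
  have h := integral_rpow_mul_exp_neg_mul_rpow (p := 2) (q := (n:ℝ)+1) (b := c/2)
    (by norm_num) (by push_cast; linarith [Nat.cast_nonneg (α := ℝ) n]) (by positivity)
  have heq : ∀ x : ℝ, x ^ ((n:ℝ)+1) * exp (-(c/2) * x ^ (2:ℝ)) =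
      x ^ (n+1) * exp (-(c * x ^ 2) / 2) := by
    intro x
    rw [show ((n:ℝ)+1) = ((n+1 : ℕ) : ℝ) by push_cast; ring, Real.rpow_natCast,
      show (2:ℝ) = ((2:ℕ):ℝ) by norm_num, Real.rpow_natCast]
    ring_nf
  simp_rw [heq] at h
  rw [h, show (-((n:ℝ) + 1 + 1) / 2 : ℝ) = -((n:ℝ)+2)/2 by ring,
    show (((n:ℝ) + 1 + 1) / 2:ℝ) = ((n:ℝ)+2)/2 by ring]

private theorem integrableOn_gamma_aux (n : ℕ) (c : ℝ) (hc : 0 < c) :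
    IntegrableOn (fun t : ℝ => t ^ (n+1) * exp (-(c * t ^ 2) / 2)) (Ioi 0) := by
  have h := integrableOn_rpow_mul_exp_neg_mul_sq (b := c/2) (by positivity)
    (s := (n:ℝ)+1) (by push_cast; linarith [Nat.cast_nonneg (α := ℝ) n])
  apply h.congr_fun ?_ measurableSet_Ioi
  intro x _
  simp only [show ((n:ℝ)+1) = ((n+1 : ℕ) : ℝ) by push_cast; ring, Real.rpow_natCast]
  ring_nf

private theorem lint_smul {E : Type*} [NormedAddCommGroup E] [NormedSpace ℝ E] [MeasurableSpace E]
    [BorelSpace E] [FiniteDimensional ℝ E] (μ : Measure E) [μ.IsAddHaarMeasure]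
    (K : Set E) (hK : MeasurableSet K) (f : E → ℝ≥0∞) (hf : Measurable f) {t : ℝ} (ht : 0 < t) :
    ∫⁻ x in t • K, f x ∂μ = ENNReal.ofReal (t ^ Module.finrank ℝ E) * ∫⁻ y in K, f (t • y) ∂μ := by
  have ht' : t ≠ 0 := ne_of_gt ht
  have hsm : Measurable fun y : E => t • y := (continuous_const_smul t).measurable
  have htK : MeasurableSet (t • K) := by
    have : t • K = (fun y : E => t⁻¹ • y) ⁻¹' K := by
      ext x; rw [Set.mem_smul_set_iff_inv_smul_mem₀ ht']; rfl
    rw [this]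
    exact ((continuous_const_smul t⁻¹).measurable) hK
  have hpre : (fun y : E => t • y) ⁻¹' (t • K) = K := by
    ext x
    simp only [Set.mem_preimage]
    rw [Set.mem_smul_set_iff_inv_smul_mem₀ ht', inv_smul_smul₀ ht']
  have h1 : ∫⁻ y in K, f (t • y) ∂μ = ∫⁻ x, f x ∂((μ.restrict K).map (fun y => t • y)) := by
    rw [lintegral_map hf hsm]
  rw [h1, show (μ.restrict K).map (fun y : E => t • y)
      = ((μ.map (fun y : E => t • y)).restrict (t • K)) by
    rw [Measure.restrict_map hsm htK, hpre]]
  rw [map_addHaar_smul μ ht', Measure.restrict_smul, lintegral_smul_measure, smul_eq_mul, ← mul_assoc,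
    ← ENNReal.ofReal_mul (by positivity), abs_of_nonneg (by positivity),
    mul_inv_cancel₀ (by positivity), ENNReal.ofReal_one, one_mul]

private theorem claim1 {b : ℝ} (hb : 0 < b) (A g : ℝ) (hg : 0 ≤ g) :
    ∫⁻ t in Ioi (0:ℝ),
        (Ioi g).indicator (fun t => ENNReal.ofReal (b * t * exp (-(b * t ^ 2 + A) / 2))) t
      = ENNReal.ofReal (exp (-(b * g ^ 2) / 2) * exp (-A / 2)) := by
  rw [lintegral_indicator measurableSet_Ioi, Measure.restrict_restrict measurableSet_Ioi,
    Set.Ioi_inter_Ioi, sup_eq_left.mpr hg]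
  have hint : IntegrableOn (fun t => b * t * exp (-(b * t ^ 2 + A) / 2)) (Ioi g) := by
    have h0 := ((integrable_aux hb).integrableOn (s := Ioi g)).const_mul (exp (-A/2))
    apply MeasureTheory.IntegrableOn.congr_fun h0 ?_ measurableSet_Ioi
    intro x _
    show rexp (-A / 2) * (b * x * rexp (-(b * x ^ 2) / 2)) = b * x * rexp (-(b * x ^ 2 + A) / 2)
    rw [show -(b * x ^ 2 + A) / 2 = -A/2 + -(b * x ^ 2)/2 by ring, Real.exp_add]
    ring
  have hnn : 0 ≤ᵐ[volume.restrict (Ioi g)] fun t => b * t * exp (-(b * t ^ 2 + A) / 2) := by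
    filter_upwards [ae_restrict_mem measurableSet_Ioi] with t ht
    have : 0 ≤ t := le_trans hg (le_of_lt ht)
    positivity
  rw [← ofReal_integral_eq_lintegral_ofReal hint hnn]
  congr 1
  have : ∀ t : ℝ, b * t * exp (-(b * t ^ 2 + A) / 2)
      = exp (-A/2) * (b * t * exp (-(b * t ^ 2) / 2)) := by
    intro t
    rw [show -(b * t ^ 2 + A) / 2 = -A/2 + -(b * t ^ 2)/2 by ring, Real.exp_add]
    ring
  rw [MeasureTheory.setIntegral_congr_fun measurableSet_Ioi (fun t _ => this t),
    MeasureTheory.integral_const_mul, ftc_aux b hb g]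
  ring

private lemma gauge_lt_set {n : ℕ} (K : Set (EuclideanSpace ℝ (Fin n))) (hKconv : Convex ℝ K)
    (hK0 : 0 ∈ interior K) {t : ℝ} (ht : 0 < t) :
    {x : EuclideanSpace ℝ (Fin n) | gauge K x < t} = interior (t • K) := by
  have hnhds : t • K ∈ nhds (0 : EuclideanSpace ℝ (Fin n)) := by
    have hop : IsOpen (t • interior K) := isOpen_interior.smul₀ (ne_of_gt ht)
    have h0 : (0 : EuclideanSpace ℝ (Fin n)) ∈ t • interior K := ⟨0, hK0, smul_zero t⟩
    exact mem_nhds_iff.mpr ⟨t • interior K, smul_set_mono interior_subset, hop, h0⟩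
  rw [← gauge_lt_one_eq_interior (hKconv.smul t) hnhds]
  ext x
  simp only [mem_setOf_eq]
  rw [gauge_smul_left_of_nonneg (le_of_lt ht)]
  simp only [Pi.smul_apply, smul_eq_mul]
  rw [← div_eq_inv_mul, div_lt_one ht]

private theorem key (n : ℕ) (K : Set (EuclideanSpace ℝ (Fin n)))
    (hKconv : Convex ℝ K) (hKcomp : IsCompact K) (hK0 : 0 ∈ interior K)
    (a b : ℝ) (ha : 0 < a) (hb : 0 < b) :
    ∫⁻ x : EuclideanSpace ℝ (Fin n),
        ENNReal.ofReal (exp (-(b * gauge K x ^ 2) / 2) * exp (-(a * ‖x‖ ^ 2) / 2))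
      = ENNReal.ofReal (2 ^ ((n:ℝ)/2) * Gamma ((n:ℝ)/2 + 1)) *
        ∫⁻ y in K, ENNReal.ofReal (b * (b + a * ‖y‖ ^ 2) ^ (-((n:ℝ) + 2)/2)) := by
  have hgc : Continuous (gauge K) := continuous_gauge hKconv (mem_interior_iff_mem_nhds.mp hK0)
  have hKmeas : MeasurableSet K := hKcomp.isClosed.measurableSet
  have hd : Module.finrank ℝ (EuclideanSpace ℝ (Fin n)) = n := by
    simp [finrank_euclideanSpace]
  -- the product-space indicator function
  set S : Set (EuclideanSpace ℝ (Fin n) × ℝ) := {p | gauge K p.1 < p.2} with hS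
  have hSopen : IsOpen S := isOpen_lt (hgc.comp continuous_fst) continuous_snd
  set F2 : EuclideanSpace ℝ (Fin n) × ℝ → ℝ≥0∞ := S.indicator
    (fun p => ENNReal.ofReal (b * p.2 * exp (-(b * p.2 ^ 2 + a * ‖p.1‖ ^ 2) / 2))) with hF2
  have hF2meas : Measurable F2 := by
    apply Measurable.indicator ?_ hSopen.measurableSet
    apply ENNReal.measurable_ofReal.comp
    fun_prop
  -- Step 1: rewrite the LHS as an iterated integral
  have step1 : ∫⁻ x : EuclideanSpace ℝ (Fin n),
      ENNReal.ofReal (exp (-(b * gauge K x ^ 2) / 2) * exp (-(a * ‖x‖ ^ 2) / 2))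
      = ∫⁻ x, ∫⁻ t in Ioi (0:ℝ), F2 (x, t) := by
    apply lintegral_congr
    intro x
    rw [show -(a * ‖x‖ ^ 2) / 2 = -(a * ‖x‖ ^ 2) / 2 from rfl]
    rw [← claim1 hb (a * ‖x‖ ^ 2) (gauge K x) (gauge_nonneg x)]
    apply lintegral_congr
    intro t
    simp only [hF2, hS, Set.indicator, mem_Ioi, mem_setOf_eq]
  rw [step1]
  -- Step 2: Tonelli
  rw [lintegral_lintegral_swap (μ := volume) (ν := volume.restrict (Ioi (0:ℝ)))
    (f := fun x t => F2 (x, t)) hF2meas.aemeasurable]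
  -- Step 3: evaluate the inner integral for fixed t
  have step3 : ∀ t ∈ Ioi (0:ℝ), ∫⁻ x, F2 (x, t)
      = ∫⁻ y in K, ENNReal.ofReal (t ^ n * (b * t * exp (-((b + a * ‖y‖ ^ 2) * t ^ 2) / 2))) := by
    intro t ht
    rw [mem_Ioi] at ht
    have h1 : ∫⁻ x, F2 (x, t) = ∫⁻ x in {x : EuclideanSpace ℝ (Fin n) | gauge K x < t},
        ENNReal.ofReal (b * t * exp (-(b * t ^ 2 + a * ‖x‖ ^ 2) / 2)) := by
      rw [← lintegral_indicator (isOpen_lt hgc continuous_const).measurableSet]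
      apply lintegral_congr
      intro x
      simp only [hF2, hS, Set.indicator, mem_setOf_eq]
    rw [h1, gauge_lt_set K hKconv hK0 ht,
      setLIntegral_congr (interior_ae_eq_of_null_frontier
        ((hKconv.smul t).addHaar_frontier volume)),
      lint_smul volume K hKmeas _ (by apply ENNReal.measurable_ofReal.comp; fun_prop) ht, hd]
    rw [← lintegral_const_mul' _ _ ENNReal.ofReal_ne_top]
    apply lintegral_congr
    intro y
    rw [← ENNReal.ofReal_mul (by positivity)]
    congr 1
    rw [norm_smul, Real.norm_eq_abs, abs_of_pos ht]
    ring_nf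
  rw [setLIntegral_congr_fun measurableSet_Ioi step3]
  -- Step 4: Tonelli again
  have hG2meas : Measurable (Function.uncurry fun (t : ℝ) (y : EuclideanSpace ℝ (Fin n)) =>
      ENNReal.ofReal (t ^ n * (b * t * exp (-((b + a * ‖y‖ ^ 2) * t ^ 2) / 2)))) := by
    apply ENNReal.measurable_ofReal.comp
    apply Continuous.measurable
    fun_prop
  rw [lintegral_lintegral_swap (μ := volume.restrict (Ioi (0:ℝ))) (ν := volume.restrict K)
    hG2meas.aemeasurable]
  -- Step 5: the inner Gamma integral
  have step5 : ∀ y : EuclideanSpace ℝ (Fin n),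
      ∫⁻ t in Ioi (0:ℝ), ENNReal.ofReal (t ^ n * (b * t * exp (-((b + a * ‖y‖ ^ 2) * t ^ 2) / 2)))
      = ENNReal.ofReal (2 ^ ((n:ℝ)/2) * Gamma ((n:ℝ)/2 + 1)) *
        ENNReal.ofReal (b * (b + a * ‖y‖ ^ 2) ^ (-((n:ℝ) + 2)/2)) := by
    intro y
    set c : ℝ := b + a * ‖y‖ ^ 2 with hc
    have hcpos : 0 < c := by positivity
    have heq : ∀ t : ℝ, t ^ n * (b * t * exp (-(c * t ^ 2) / 2))
        = b * (t ^ (n+1) * exp (-(c * t ^ 2) / 2)) := by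
      intro t; ring
    simp_rw [heq]
    have hint : IntegrableOn (fun t : ℝ => b * (t ^ (n+1) * exp (-(c * t ^ 2) / 2))) (Ioi 0) :=
      (integrableOn_gamma_aux n c hcpos).const_mul b
    have hnn : 0 ≤ᵐ[volume.restrict (Ioi (0:ℝ))]
        fun t : ℝ => b * (t ^ (n+1) * exp (-(c * t ^ 2) / 2)) := by
      filter_upwards [ae_restrict_mem measurableSet_Ioi] with t ht
      have : (0:ℝ) ≤ t := le_of_lt ht
      positivity
    rw [← ofReal_integral_eq_lintegral_ofReal hint hnn, MeasureTheory.integral_const_mul,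
      gamma_aux n c hcpos, ← ENNReal.ofReal_mul (by positivity)]
    congr 1
    rw [Real.div_rpow (le_of_lt hcpos) (by norm_num),
      show Gamma (((n:ℝ) + 2)/2) = Gamma ((n:ℝ)/2 + 1) by congr 1; ring]
    rw [show (2:ℝ) ^ (-((n:ℝ) + 2)/2) = ((2:ℝ) ^ (((n:ℝ) + 2)/2))⁻¹ by
      rw [← Real.rpow_neg (by norm_num)]; congr 1; ring]
    have h2 : (2:ℝ) ^ (((n:ℝ) + 2)/2) = 2 ^ ((n:ℝ)/2) * 2 := by
      rw [show ((n:ℝ) + 2)/2 = (n:ℝ)/2 + 1 by ring, Real.rpow_add (by norm_num), Real.rpow_one]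
    rw [h2]
    have h2pos : (0:ℝ) < 2 ^ ((n:ℝ)/2) := Real.rpow_pos_of_pos (by norm_num) _
    field_simp
  simp_rw [step5]
  rw [lintegral_const_mul' _ _ ENNReal.ofReal_ne_top]

/-- for a convex body `K` with `0 ∈ int K` and `a, b > 0`,
`(2π)^{−n/2} ∫ e^{−½b‖x‖_K²} e^{−½a|x|²} dx
  = |B₂ⁿ|⁻¹ ∫_K b (b + a|x|²)^{−(n+2)/2} dx`. -/
theorem integral_exp_gauge_weighted (n : ℕ) (K : Set (EuclideanSpace ℝ (Fin n)))
    (hKconv : Convex ℝ K) (hKcomp : IsCompact K) (hK0 : 0 ∈ interior K)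
    (a b : ℝ) (ha : 0 < a) (hb : 0 < b) :
    (2 * π) ^ (-(n : ℝ) / 2) *
        ∫ x : EuclideanSpace ℝ (Fin n),
          Real.exp (-(b * gauge K x ^ 2) / 2) * Real.exp (-(a * ‖x‖ ^ 2) / 2) =
      (volume (Metric.closedBall (0 : EuclideanSpace ℝ (Fin n)) 1)).toReal⁻¹ *
        ∫ x in K, b * (b + a * ‖x‖ ^ 2) ^ (-((n : ℝ) + 2) / 2) := by
  have hgc : Continuous (gauge K) := continuous_gauge hKconv (mem_interior_iff_mem_nhds.mp hK0)
  have hgam : 0 < Gamma ((n:ℝ)/2 + 1) := Real.Gamma_pos_of_pos (by positivity)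
  have hL : ∫ x : EuclideanSpace ℝ (Fin n),
      exp (-(b * gauge K x ^ 2) / 2) * exp (-(a * ‖x‖ ^ 2) / 2)
      = (∫⁻ x : EuclideanSpace ℝ (Fin n),
          ENNReal.ofReal (exp (-(b * gauge K x ^ 2) / 2) * exp (-(a * ‖x‖ ^ 2) / 2))).toReal := by
    apply integral_eq_lintegral_of_nonneg_ae
    · exact ae_of_all _ (fun x => by positivity)
    · exact ((((continuous_const.mul (hgc.pow 2))).neg.div_const 2).rexp.mul
        (by fun_prop)).aestronglyMeasurable
  have hbase : Continuous fun x : EuclideanSpace ℝ (Fin n) => b + a * ‖x‖ ^ 2 := by fun_prop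
  have hR : ∫ x in K, b * (b + a * ‖x‖ ^ 2) ^ (-((n : ℝ) + 2) / 2)
      = (∫⁻ x in K,
          ENNReal.ofReal (b * (b + a * ‖x‖ ^ 2) ^ (-((n:ℝ) + 2)/2))).toReal := by
    apply integral_eq_lintegral_of_nonneg_ae
    · refine ae_of_all _ (fun x => ?_)
      have : (0:ℝ) < b + a * ‖x‖ ^ 2 := by positivity
      positivity
    · exact (continuous_const.mul
        (hbase.rpow_const (fun x => Or.inl (by positivity)))).aestronglyMeasurable
  rw [hL, hR, key n K hKconv hKcomp hK0 a b ha hb, ENNReal.toReal_mul,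
    ENNReal.toReal_ofReal (by positivity)]
  have hvol : (volume (Metric.closedBall (0 : EuclideanSpace ℝ (Fin n)) 1)).toReal
      = Real.sqrt π ^ n / Gamma ((n:ℝ)/2 + 1) := by
    rcases Nat.eq_zero_or_pos n with hn | hn
    · subst hn
      have hball : (Metric.closedBall (0 : EuclideanSpace ℝ (Fin 0)) 1) = Set.univ := by
        ext x
        simp [Subsingleton.elim x 0]
      rw [hball]
      rw [← ((PiLp.volume_preserving_toLp (ι := Fin 0))).measure_preimage
        MeasurableSet.univ.nullMeasurableSet,
        show ((@WithLp.toLp 2 (Fin 0 → ℝ)) ⁻¹' Set.univ) = Set.univ by simp,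
        MeasureTheory.volume_pi, MeasureTheory.Measure.pi_univ]
      simp [Real.Gamma_one]
    · haveI : Nonempty (Fin n) := Fin.pos_iff_nonempty.mp hn
      rw [EuclideanSpace.volume_closedBall]
      simp only [Fintype.card_fin, ENNReal.ofReal_one, one_pow, one_mul]
      rw [ENNReal.toReal_ofReal (div_nonneg (by positivity) hgam.le)]
  rw [hvol]
  have hsq : Real.sqrt π ^ n = π ^ ((n:ℝ)/2) := by
    rw [Real.sqrt_eq_rpow, ← Real.rpow_natCast (π ^ ((1:ℝ)/2)) n, ← Real.rpow_mul pi_pos.le]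
    congr 1; ring
  have hmulpow : (2 * π : ℝ) ^ (-(n:ℝ)/2) = 2 ^ (-(n:ℝ)/2) * π ^ (-(n:ℝ)/2) :=
    Real.mul_rpow (by norm_num) pi_pos.le
  have hπ : (π:ℝ) ^ (-(n:ℝ)/2) = (π ^ ((n:ℝ)/2))⁻¹ := by
    rw [← Real.rpow_neg pi_pos.le]; congr 1; ring
  have h2' : (2:ℝ) ^ (-(n:ℝ)/2) = ((2:ℝ) ^ ((n:ℝ)/2))⁻¹ := by
    rw [← Real.rpow_neg (by norm_num)]; congr 1; ring
  rw [← mul_assoc, hmulpow, hπ, h2', hsq, inv_div]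
  have hp1 : (0:ℝ) < 2 ^ ((n:ℝ)/2) := Real.rpow_pos_of_pos (by norm_num) _
  have hp2 : (0:ℝ) < π ^ ((n:ℝ)/2) := Real.rpow_pos_of_pos pi_pos _
  field_simp
end

section
/- Let β > 0 and γ_β(x) = (2πβ)^{−n/2} e^{−|x|²/(2β)}. For s > 0 and p, q ∈ ℝ∖{0} satisfying (q−1)/(p−1) = e^{2s}, if β_{s,p} := 1 + (β−1)(q/p)e^{−2s} > 0, then ‖P_s[(γ_β/γ)^{1/p}]‖_{L^q(γ)} = β^{n/(2p')} · β_{s,p}^{−n/(2q')}, where 1/p + 1/p' = 1 and 1/q + 1/q' = 1. -/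
open MeasureTheory Real
open scoped RealInnerProductSpace

lemma gauss_int (n : ℕ) {b : ℝ} (hb : 0 < b) (c : ℝ) (w : EuclideanSpace ℝ (Fin n)) :
    ∫ v : EuclideanSpace ℝ (Fin n), rexp (-b * ‖v‖ ^ 2 + c * ⟪w, v⟫) =
      (π / b) ^ ((n : ℝ) / 2) * rexp (c ^ 2 * ‖w‖ ^ 2 / (4 * b)) := by
  have hbC : 0 < (b : ℂ).re := by simpa using hb
  have key := GaussianFourier.integral_cexp_neg_mul_sq_norm_add
    (V := EuclideanSpace ℝ (Fin n)) hbC (c : ℂ) w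
  have hint := integral_ofReal (𝕜 := ℂ) (μ := (volume : Measure (EuclideanSpace ℝ (Fin n))))
    (f := fun v : EuclideanSpace ℝ (Fin n) => rexp (-b * ‖v‖ ^ 2 + c * ⟪w, v⟫))
  have h1 : ∀ v : EuclideanSpace ℝ (Fin n),
      ((rexp (-b * ‖v‖ ^ 2 + c * ⟪w, v⟫) : ℝ) : ℂ)
        = Complex.exp (-(b:ℂ) * (‖v‖ : ℂ) ^ 2 + (c : ℂ) * ((⟪w, v⟫ : ℝ) : ℂ)) := by
    intro v
    rw [Complex.ofReal_exp]
    push_cast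
    ring_nf
  have h2 : ((∫ v : EuclideanSpace ℝ (Fin n), rexp (-b * ‖v‖ ^ 2 + c * ⟪w, v⟫) : ℝ) : ℂ)
      = ∫ v : EuclideanSpace ℝ (Fin n),
          Complex.exp (-(b:ℂ) * (‖v‖ : ℂ) ^ 2 + (c : ℂ) * ((⟪w, v⟫ : ℝ) : ℂ)) :=
    hint.symm.trans (integral_congr_ae (Filter.Eventually.of_forall h1))
  rw [← Complex.ofReal_inj, h2, key]
  rw [Complex.ofReal_mul, Complex.ofReal_exp]
  congr 1
  · rw [Complex.ofReal_cpow (by positivity : (0:ℝ) ≤ π / b)]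
    push_cast [finrank_euclideanSpace_fin]
    norm_num
  · push_cast
    ring

/-- Standard Gaussian density on `ℝⁿ`. -/
noncomputable def gaussD (n : ℕ) (x : EuclideanSpace ℝ (Fin n)) : ℝ :=
  (2 * π) ^ (-(n : ℝ) / 2) * Real.exp (-‖x‖ ^ 2 / 2)

/-- Centered Gaussian density of variance `β` on `ℝⁿ`. -/
noncomputable def gaussV (n : ℕ) (β : ℝ) (x : EuclideanSpace ℝ (Fin n)) : ℝ :=
  (2 * π * β) ^ (-(n : ℝ) / 2) * Real.exp (-‖x‖ ^ 2 / (2 * β))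

/-- Ornstein–Uhlenbeck semigroup. -/
noncomputable def OU (n : ℕ) (s : ℝ) (f : EuclideanSpace ℝ (Fin n) → ℝ)
    (x : EuclideanSpace ℝ (Fin n)) : ℝ :=
  ∫ y : EuclideanSpace ℝ (Fin n),
    f (Real.exp (-s) • x + Real.sqrt (1 - Real.exp (-2 * s)) • y) * gaussD n y

/-- `L^q(γ)` "norm" (also for negative exponents `q`). -/
noncomputable def gaussLq (n : ℕ) (q : ℝ) (g : EuclideanSpace ℝ (Fin n) → ℝ) : ℝ :=
  (∫ x : EuclideanSpace ℝ (Fin n), g x ^ q * gaussD n x) ^ (1 / q)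

/-- value of the hypercontractivity quantity on centered Gaussians
when `(q−1)/(p−1) = e^{2s}` and `β_{s,p} > 0`. -/
theorem gaussLq_ou_gaussian (n : ℕ) (s β p q p' q' : ℝ) (hs : 0 < s) (hβ : 0 < β)
    (hp : p ≠ 0) (hq : q ≠ 0) (hN : (q - 1) / (p - 1) = Real.exp (2 * s))
    (hp' : 1 / p + 1 / p' = 1) (hq' : 1 / q + 1 / q' = 1)
    (hβsp : 0 < 1 + (β - 1) * (q / p) * Real.exp (-2 * s)) :
    gaussLq n q (OU n s fun x => (gaussV n β x / gaussD n x) ^ (1 / p)) =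
      β ^ ((n : ℝ) / (2 * p')) *
        (1 + (β - 1) * (q / p) * Real.exp (-2 * s)) ^ (-(n : ℝ) / (2 * q')) := by
  have hπ : (0:ℝ) < 2 * π := by positivity
  set u : ℝ := Real.exp (-2 * s) with hu
  have hu0 : 0 < u := Real.exp_pos _
  have hu1 : u < 1 := by
    rw [hu, show (1:ℝ) = Real.exp 0 by simp]
    exact Real.exp_lt_exp.mpr (by linarith)
  have hp1 : p ≠ 1 := by
    intro h
    rw [h, sub_self, div_zero] at hN
    exact (Real.exp_pos (2*s)).ne' hN.symm
  have hq1 : q ≠ 1 := by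
    intro h
    rw [h, sub_self, zero_div] at hN
    exact (Real.exp_pos (2*s)).ne' hN.symm
  have hp1' : p - 1 ≠ 0 := sub_ne_zero.mpr hp1
  rw [div_eq_iff hp1'] at hN
  have hexp : Real.exp (2*s) * u = 1 := by
    rw [hu, ← Real.exp_add]; norm_num
  have hpq : (q - 1) * u = p - 1 := by
    calc (q - 1) * u = (p - 1) * (Real.exp (2*s) * u) := by rw [hN]; ring
    _ = p - 1 := by rw [hexp, mul_one]
  set c0 : ℝ := (1 - β) / (β * p) with hc0
  set A : ℝ := 1 + c0 * (1 - u) with hA_def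
  set K : ℝ := 1 + (β - 1) * (q / p) * u with hK_def
  have hK : 0 < K := hβsp
  clear_value u
  have hP : p = (q - 1) * u + 1 := by linarith
  have hPne : (q - 1) * u + 1 ≠ 0 := by rw [← hP]; exact hp
  have hKA : β * A = K := by
    rw [hA_def, hK_def, hc0, hP]
    field_simp
    ring
  have hA : 0 < A := by
    by_contra h
    push_neg at h
    nlinarith [mul_nonpos_of_nonneg_of_nonpos hβ.le h]
  have key2 : (A + q * c0 * u) * β = 1 := by
    rw [hA_def, hc0, hP]
    field_simp
    ring
  clear_value c0 A K
  -- step 1 : the function under OU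
  have hf : ∀ z : EuclideanSpace ℝ (Fin n),
      (gaussV n β z / gaussD n z) ^ (1/p)
        = β ^ (-(n:ℝ)/(2*p)) * rexp (-(c0/2) * ‖z‖^2) := by
    intro z
    have h1 : gaussV n β z / gaussD n z
        = β ^ (-(n:ℝ)/2) * rexp (-‖z‖^2/(2*β) + ‖z‖^2/2) := by
      simp only [gaussV, gaussD]
      rw [Real.mul_rpow hπ.le hβ.le, div_eq_iff (by positivity)]
      have h2 : rexp (-‖z‖^2/(2*β) + ‖z‖^2/2) * rexp (-‖z‖^2/2) = rexp (-‖z‖^2/(2*β)) := by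
        rw [← Real.exp_add]; congr 1; ring
      linear_combination (-((2*π) ^ (-(n:ℝ)/2) * β ^ (-(n:ℝ)/2))) * h2
    rw [h1, Real.mul_rpow (by positivity) (Real.exp_nonneg _), ← Real.rpow_mul hβ.le,
      ← Real.exp_mul]
    congr 1
    · congr 1
      ring
    · rw [hc0]
      field_simp
      ring
  -- step 2 : the OU image
  have hOU : ∀ x : EuclideanSpace ℝ (Fin n),
      OU n s (fun z => (gaussV n β z / gaussD n z) ^ (1 / p)) x
        = β ^ (-(n:ℝ)/(2*p)) * A ^ (-(n:ℝ)/2) * rexp (-(c0*u/(2*A)) * ‖x‖^2) := by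
    intro x
    unfold OU
    rw [← hu]
    set t := Real.sqrt (1 - u) with htd
    have ht0 : (0:ℝ) ≤ t := Real.sqrt_nonneg _
    have ht2 : t^2 = 1 - u := Real.sq_sqrt (by linarith)
    have hes2 : Real.exp (-s) ^ 2 = u := by rw [hu, sq, ← Real.exp_add]; congr 1; ring
    have harg : ∀ y : EuclideanSpace ℝ (Fin n),
        -(c0/2) * ‖Real.exp (-s) • x + t • y‖^2 + (-‖y‖^2/2)
          = (-(c0*u/2) * ‖x‖^2) + (-(A/2) * ‖y‖^2 + (-(c0 * Real.exp (-s) * t)) * ⟪x, y⟫) := by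
      intro y
      rw [norm_add_sq_real, norm_smul, norm_smul, real_inner_smul_left, real_inner_smul_right]
      simp only [Real.norm_eq_abs, abs_of_pos (Real.exp_pos (-s)), abs_of_nonneg ht0]
      rw [mul_pow, mul_pow, hes2, ht2, hA_def]
      ring
    have hpoint : ∀ y : EuclideanSpace ℝ (Fin n),
        ((gaussV n β (Real.exp (-s) • x + t • y) / gaussD n (Real.exp (-s) • x + t • y)) ^ (1/p))
            * gaussD n y
          = (β ^ (-(n:ℝ)/(2*p)) * ((2*π) ^ (-(n:ℝ)/2) * rexp (-(c0*u/2) * ‖x‖^2)))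
              * rexp (-(A/2) * ‖y‖^2 + (-(c0 * Real.exp (-s) * t)) * ⟪x, y⟫) := by
      intro y
      rw [hf]
      simp only [gaussD]
      have h3 : rexp (-(c0/2) * ‖Real.exp (-s) • x + t • y‖^2) * rexp (-‖y‖^2/2)
          = rexp (-(c0*u/2) * ‖x‖^2)
              * rexp (-(A/2) * ‖y‖^2 + (-(c0 * Real.exp (-s) * t)) * ⟪x, y⟫) := by
        rw [← Real.exp_add, ← Real.exp_add, harg y]
      linear_combination (β ^ (-(n:ℝ)/(2*p)) * (2*π) ^ (-(n:ℝ)/2)) * h3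
    simp_rw [hpoint]
    rw [MeasureTheory.integral_const_mul]
    rw [gauss_int n (show (0:ℝ) < A/2 by linarith) _ x]
    have h4 : (π/(A/2)) ^ ((n:ℝ)/2) = (2*π) ^ ((n:ℝ)/2) * A ^ (-(n:ℝ)/2) := by
      rw [show π/(A/2) = (2*π) * A⁻¹ by field_simp]
      rw [Real.mul_rpow hπ.le (inv_nonneg.mpr hA.le), Real.inv_rpow hA.le,
        ← Real.rpow_neg hA.le]
      congr 1
      ring
    have h5 : (-(c0 * Real.exp (-s) * t))^2 * ‖x‖^2 / (4*(A/2))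
        = c0^2*u*(1-u)*‖x‖^2/(2*A) := by
      rw [neg_sq, mul_pow, mul_pow, hes2, ht2]
      ring
    rw [h4, h5]
    have h6 : rexp (-(c0*u/2) * ‖x‖^2) * rexp (c0^2*u*(1-u)*‖x‖^2/(2*A))
        = rexp (-(c0*u/(2*A)) * ‖x‖^2) := by
      rw [← Real.exp_add]
      congr 1
      field_simp
      linear_combination (-(c0*‖x‖^2)) * hA_def
    have h7 : (2*π) ^ (-(n:ℝ)/2) * (2*π) ^ ((n:ℝ)/2) = 1 := by
      rw [← Real.rpow_add hπ, show -(n:ℝ)/2 + (n:ℝ)/2 = 0 by ring, Real.rpow_zero]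
    linear_combination
      (β ^ (-(n:ℝ)/(2*p)) * A ^ (-(n:ℝ)/2) * (2*π) ^ (-(n:ℝ)/2) * (2*π) ^ ((n:ℝ)/2)) * h6
      + (β ^ (-(n:ℝ)/(2*p)) * A ^ (-(n:ℝ)/2) * rexp (-(c0*u/(2*A)) * ‖x‖^2)) * h7
  -- step 3 : outer integral
  have hC1 : (0:ℝ) < β ^ (-(n:ℝ)/(2*p)) * A ^ (-(n:ℝ)/2) := by positivity
  unfold gaussLq
  simp_rw [hOU]
  have hpt2 : ∀ x : EuclideanSpace ℝ (Fin n),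
      (β ^ (-(n:ℝ)/(2*p)) * A ^ (-(n:ℝ)/2) * rexp (-(c0*u/(2*A)) * ‖x‖^2)) ^ q * gaussD n x
        = ((β ^ (-(n:ℝ)/(2*p)) * A ^ (-(n:ℝ)/2)) ^ q * (2*π) ^ (-(n:ℝ)/2))
            * rexp (-(1/(2*K)) * ‖x‖^2) := by
    intro x
    simp only [gaussD]
    rw [Real.mul_rpow hC1.le (Real.exp_nonneg _), ← Real.exp_mul]
    have h8 : -(c0*u/(2*A)) * ‖x‖^2 * q + (-‖x‖^2/2) = -(1/(2*K)) * ‖x‖^2 := by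
      rw [← hKA]
      field_simp [hA.ne', hβ.ne']
      linear_combination (-(‖x‖^2)) * key2
    have h9 : rexp (-(c0*u/(2*A)) * ‖x‖^2 * q) * rexp (-‖x‖^2/2)
        = rexp (-(1/(2*K)) * ‖x‖^2) := by
      rw [← Real.exp_add, h8]
    linear_combination ((β ^ (-(n:ℝ)/(2*p)) * A ^ (-(n:ℝ)/2)) ^ q * (2*π) ^ (-(n:ℝ)/2)) * h9
  simp_rw [hpt2]
  rw [MeasureTheory.integral_const_mul]
  rw [GaussianFourier.integral_rexp_neg_mul_sq_norm (show (0:ℝ) < 1/(2*K) by positivity)]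
  rw [finrank_euclideanSpace_fin]
  have h10 : (π/(1/(2*K))) ^ ((n:ℝ)/2) = (2*π) ^ ((n:ℝ)/2) * K ^ ((n:ℝ)/2) := by
    rw [show π/(1/(2*K)) = (2*π)*K by field_simp, Real.mul_rpow hπ.le hK.le]
  rw [h10]
  have h7 : (2*π) ^ (-(n:ℝ)/2) * (2*π) ^ ((n:ℝ)/2) = 1 := by
    rw [← Real.rpow_add hπ, show -(n:ℝ)/2 + (n:ℝ)/2 = 0 by ring, Real.rpow_zero]
  have h11 : (β ^ (-(n:ℝ)/(2*p)) * A ^ (-(n:ℝ)/2)) ^ q * (2*π) ^ (-(n:ℝ)/2)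
      * ((2*π) ^ ((n:ℝ)/2) * K ^ ((n:ℝ)/2))
      = (β ^ (-(n:ℝ)/(2*p)) * A ^ (-(n:ℝ)/2)) ^ q * K ^ ((n:ℝ)/2) := by
    linear_combination ((β ^ (-(n:ℝ)/(2*p)) * A ^ (-(n:ℝ)/2)) ^ q * K ^ ((n:ℝ)/2)) * h7
  rw [h11]
  rw [Real.mul_rpow (by positivity) (by positivity), ← Real.rpow_mul hC1.le,
    ← Real.rpow_mul hK.le, mul_one_div, div_self hq, Real.rpow_one]
  -- final algebra
  have hp'0 : p' ≠ 0 := by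
    intro h
    rw [h, div_zero, add_zero] at hp'
    exact hp1 (by field_simp at hp'; exact hp'.symm)
  have hq'0 : q' ≠ 0 := by
    intro h
    rw [h, div_zero, add_zero] at hq'
    exact hq1 (by field_simp at hq'; exact hq'.symm)
  have h1p' : 1/p' = 1 - 1/p := by linarith
  have h1q' : 1/q' = 1 - 1/q := by linarith
  have hA2 : A = K / β := by
    rw [eq_div_iff hβ.ne']
    linear_combination hKA
  rw [hA2, Real.div_rpow hK.le hβ.le]
  have hb1 : β ^ (-(n:ℝ)/(2*p)) / β ^ (-(n:ℝ)/2) = β ^ ((n:ℝ)/(2*p')) := by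
    rw [← Real.rpow_sub hβ]
    congr 1
    rw [show (n:ℝ)/(2*p') = (n:ℝ)/2*(1/p') by ring, h1p']
    ring
  have hk1 : K ^ (-(n:ℝ)/2) * K ^ ((n:ℝ)/2*(1/q)) = K ^ (-(n:ℝ)/(2*q')) := by
    rw [← Real.rpow_add hK]
    congr 1
    rw [show -(n:ℝ)/(2*q') = -((n:ℝ)/2*(1/q')) by ring, h1q']
    ring
  linear_combination (K ^ (-(n:ℝ)/2) * K ^ ((n:ℝ)/2*(1/q))) * hb1
    + (β ^ ((n:ℝ)/(2*p'))) * hk1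
end

section
/- Let φ : ℝⁿ → ℝ be concave and suppose Q_1φ(x₀) = φ(y₀) + ½|x₀−y₀|² for some x₀, y₀ ∈ ℝⁿ (i.e., the infimum defining Q_1φ(x₀) is attained at y₀). Then φ is differentiable at y₀ and ∇φ(y₀) = x₀ − y₀. -/
open MeasureTheory Real

/-- if `φ` is concave and the infimum defining `Q₁φ(x₀)` is attained
at `y₀`, then `φ` is differentiable at `y₀` with gradient `x₀ − y₀`. -/
theorem gradient_at_hopfLax_argmin (n : ℕ)
    (φ : EuclideanSpace ℝ (Fin n) → ℝ) (hconc : ConcaveOn ℝ Set.univ φ)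
    (x₀ y₀ : EuclideanSpace ℝ (Fin n))
    (hmin : ∀ y, φ y₀ + ‖x₀ - y₀‖ ^ 2 / 2 ≤ φ y + ‖x₀ - y‖ ^ 2 / 2) :
    HasGradientAt φ (x₀ - y₀) y₀ := by
  set v := x₀ - y₀ with hv
  have lower : ∀ y, φ y₀ + inner ℝ v (y - y₀) - ‖y - y₀‖ ^ 2 / 2 ≤ φ y := by
    intro y
    have h := hmin y
    have expand : ‖x₀ - y‖ ^ 2 = ‖v‖ ^ 2 - 2 * inner ℝ v (y - y₀) + ‖y - y₀‖ ^ 2 := by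
      have : x₀ - y = v - (y - y₀) := by rw [hv]; abel
      rw [this, norm_sub_sq_real]
    rw [expand] at h
    linarith
  have key : ∀ y, |φ y - φ y₀ - inner ℝ v (y - y₀)| ≤ ‖y - y₀‖ ^ 2 / 2 := by
    intro y
    have hlow := lower y
    have hz : ∀ z : EuclideanSpace ℝ (Fin n),
        (1/2 : ℝ) • φ y + (1/2 : ℝ) • φ z ≤ φ ((1/2 : ℝ) • y + (1/2 : ℝ) • z) := by
      intro z
      exact hconc.2 (Set.mem_univ y) (Set.mem_univ z) (by norm_num) (by norm_num) (by norm_num)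
    have hmid := hz (y₀ + (y₀ - y))
    have hcomb : (1/2 : ℝ) • y + (1/2 : ℝ) • (y₀ + (y₀ - y)) = y₀ := by
      module
    rw [hcomb] at hmid
    have hlow2 := lower (y₀ + (y₀ - y))
    have e1 : y₀ + (y₀ - y) - y₀ = -(y - y₀) := by abel
    rw [e1, inner_neg_right, norm_neg] at hlow2
    simp only [smul_eq_mul] at hmid
    rw [abs_le]
    constructor <;> linarith
  rw [hasGradientAt_iff_isLittleO]
  rw [Asymptotics.isLittleO_iff]
  intro c hc
  rw [Metric.eventually_nhds_iff]
  refine ⟨2 * c, by linarith, fun y hy => ?_⟩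
  have hd : ‖y - y₀‖ < 2 * c := by rwa [← dist_eq_norm]
  have h1 := key y
  have hn : (0:ℝ) ≤ ‖y - y₀‖ := norm_nonneg _
  calc ‖φ y - φ y₀ - inner ℝ v (y - y₀)‖ = |φ y - φ y₀ - inner ℝ v (y - y₀)| := rfl
    _ ≤ ‖y - y₀‖ ^ 2 / 2 := h1
    _ ≤ c * ‖y - y₀‖ := by nlinarith
end

section
/- Let β ≥ 1 and let φ : ℝⁿ → ℝ be concave and −(1−1/β)-semi-convex (i.e., φ(x) + ½(1−1/β)|x|² is convex). Then Q_1φ is continuous on ℝⁿ (both lower and upper semicontinuous). -/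
open MeasureTheory Real

open scoped RealInnerProductSpace

private lemma add_ciInf' {ι : Type*} [Nonempty ι] (c : ℝ) (u : ι → ℝ)
    (hb : BddBelow (Set.range u)) :
    (⨅ i, (c + u i)) = c + ⨅ i, u i := by
  obtain ⟨b, hbb⟩ := hb
  have hb2 : BddBelow (Set.range fun i => c + u i) := by
    refine ⟨c + b, ?_⟩
    rintro _ ⟨j, rfl⟩
    have := hbb ⟨j, rfl⟩
    simpa using add_le_add_left this c
  apply le_antisymm
  · have h1 : ∀ i, (⨅ j, (c + u j)) - c ≤ u i := fun i => by
      have h := ciInf_le hb2 i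
      linarith
    linarith [le_ciInf h1]
  · refine le_ciInf fun i => ?_
    have := ciInf_le ⟨b, hbb⟩ i
    linarith

/-- if `β ≥ 1` and `φ : ℝⁿ → ℝ` is concave and `−(1−1/β)`-semi-convex
(i.e. `φ + ½(1−1/β)|·|²` is convex), then the Hopf–Lax infimal convolution
`Q₁φ(x) = inf_y (φ(y) + ½|x−y|²)` is continuous on `ℝⁿ`. -/
theorem hopfLax_continuous (n : ℕ) (β : ℝ) (hβ : 1 ≤ β)
    (φ : EuclideanSpace ℝ (Fin n) → ℝ)
    (hconc : ConcaveOn ℝ Set.univ φ)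
    (hsc : ConvexOn ℝ Set.univ (fun x => φ x + (1 - 1 / β) / 2 * ‖x‖ ^ 2)) :
    Continuous (fun x : EuclideanSpace ℝ (Fin n) =>
      ⨅ (y : EuclideanSpace ℝ (Fin n)), (φ y + ‖x - y‖ ^ 2 / 2)) := by
  have hβ0 : (0:ℝ) < β := lt_of_lt_of_le one_pos hβ
  -- ψ := φ + (1-1/β)/2 ‖·‖² is continuous, hence bounded on the closed unit ball
  have hψcont : Continuous (fun x : EuclideanSpace ℝ (Fin n) =>
      φ x + (1 - 1 / β) / 2 * ‖x‖ ^ 2) := by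
    rw [← continuousOn_univ]
    exact hsc.continuousOn isOpen_univ
  obtain ⟨C, hC⟩ : ∃ C, ∀ z ∈ Metric.closedBall (0 : EuclideanSpace ℝ (Fin n)) 1,
      |φ z + (1 - 1 / β) / 2 * ‖z‖ ^ 2| ≤ C := by
    obtain ⟨C, hC⟩ := (isCompact_closedBall (0 : EuclideanSpace ℝ (Fin n)) 1
      ).exists_bound_of_continuousOn hψcont.continuousOn
    exact ⟨C, fun z hz => hC z hz⟩
  have hC0 : 0 ≤ C := le_trans (abs_nonneg _) (hC 0 (by simp))
  have hψ0 : -C ≤ φ 0 + (1 - 1 / β) / 2 * ‖(0 : EuclideanSpace ℝ (Fin n))‖ ^ 2 :=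
    neg_le_of_abs_le (hC 0 (by simp))
  have hφ0 : -C ≤ φ 0 := by simpa using hψ0
  -- linear lower bound on ψ
  have hψlb : ∀ y : EuclideanSpace ℝ (Fin n),
      -C - 2 * C * ‖y‖ ≤ φ y + (1 - 1 / β) / 2 * ‖y‖ ^ 2 := by
    intro y
    rcases eq_or_ne y 0 with rfl | hy
    · simpa using hψ0
    · have ht0 : 0 < ‖y‖ := norm_pos_iff.mpr hy
      have h1t : 0 < 1 + ‖y‖ := by linarith
      have hne : (1 + ‖y‖) ≠ 0 := h1t.ne'
      set u : EuclideanSpace ℝ (Fin n) := ‖y‖⁻¹ • y with hu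
      have hun : ‖u‖ = 1 := by
        rw [hu, norm_smul, norm_inv, norm_norm, inv_mul_cancel₀ ht0.ne']
      have hcomb : (1/(1+‖y‖)) • y + (‖y‖/(1+‖y‖)) • (-u) = (0 : EuclideanSpace ℝ (Fin n)) := by
        rw [hu, smul_neg, smul_smul]
        have he : ‖y‖ / (1 + ‖y‖) * ‖y‖⁻¹ = 1 / (1 + ‖y‖) := by
          field_simp
        rw [he, ← sub_eq_add_neg, sub_self]
      have hconv := hsc.2 (Set.mem_univ y) (Set.mem_univ (-u))
        (by positivity : (0:ℝ) ≤ 1/(1+‖y‖)) (by positivity : (0:ℝ) ≤ ‖y‖/(1+‖y‖))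
        (by field_simp)
      rw [hcomb] at hconv
      simp only [smul_eq_mul, norm_zero, ne_eq, OfNat.ofNat_ne_zero, not_false_eq_true,
        zero_pow, mul_zero, add_zero] at hconv
      -- hconv : φ 0 ≤ 1/(1+‖y‖) * ψ y + ‖y‖/(1+‖y‖) * ψ (-u)
      have hψu : φ (-u) + (1 - 1 / β) / 2 * ‖-u‖ ^ 2 ≤ C :=
        le_of_abs_le (hC (-u) (by simp [hun]))
      have hmul := mul_le_mul_of_nonneg_left hconv h1t.le
      have e1 : (1+‖y‖) * (1/(1+‖y‖) * (φ y + (1 - 1 / β) / 2 * ‖y‖ ^ 2))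
          = φ y + (1 - 1 / β) / 2 * ‖y‖ ^ 2 := by
        field_simp
      have e2 : (1+‖y‖) * (‖y‖/(1+‖y‖) * (φ (-u) + (1 - 1 / β) / 2 * ‖-u‖ ^ 2))
          = ‖y‖ * (φ (-u) + (1 - 1 / β) / 2 * ‖-u‖ ^ 2) := by
        field_simp
      have h2 : ‖y‖ * (φ (-u) + (1 - 1 / β) / 2 * ‖-u‖ ^ 2) ≤ ‖y‖ * C :=
        mul_le_mul_of_nonneg_left hψu ht0.le
      have h3 : (1+‖y‖) * (-C) ≤ (1+‖y‖) * φ 0 :=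
        mul_le_mul_of_nonneg_left hφ0 h1t.le
      rw [mul_add, e1, e2] at hmul
      nlinarith [hmul, h2, h3]
  -- lower bound on φ
  have hφlb : ∀ y : EuclideanSpace ℝ (Fin n),
      -C - 2 * C * ‖y‖ - (1 - 1/β)/2 * ‖y‖^2 ≤ φ y := fun y => by linarith [hψlb y]
  -- the shifted integrand
  set term : EuclideanSpace ℝ (Fin n) → EuclideanSpace ℝ (Fin n) → ℝ :=
    fun x y => (φ y + ‖y‖^2/2) - ⟪x, y⟫ with hterm
  have htermlb : ∀ x y : EuclideanSpace ℝ (Fin n),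
      -(β * (2*C + ‖x‖)^2 / 2) - C ≤ term x y := by
    intro x y
    have h1 := hφlb y
    have h2 : ⟪x, y⟫ ≤ ‖x‖ * ‖y‖ := real_inner_le_norm x y
    have key : 0 ≤ (1/β) * ‖y‖^2 - 2*(2*C + ‖x‖)*‖y‖ + β*(2*C + ‖x‖)^2 := by
      have hnn := mul_nonneg (le_of_lt (by positivity : (0:ℝ) < 1/β))
        (sq_nonneg (‖y‖ - β*(2*C + ‖x‖)))
      have hexp : (1/β) * (‖y‖ - β*(2*C + ‖x‖))^2
          = (1/β) * ‖y‖^2 - 2*(2*C + ‖x‖)*‖y‖ + β*(2*C + ‖x‖)^2 := by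
        field_simp
        ring
      linarith [hexp ▸ hnn]
    rw [hterm]
    simp only
    linarith
  have hbdd : ∀ x : EuclideanSpace ℝ (Fin n), BddBelow (Set.range (term x)) := fun x =>
    ⟨-(β * (2*C + ‖x‖)^2 / 2) - C, by rintro _ ⟨y, rfl⟩; exact htermlb x y⟩
  set g : EuclideanSpace ℝ (Fin n) → ℝ := fun x => ⨅ y, term x y with hg
  -- g is concave
  have hgconc : ConcaveOn ℝ Set.univ g := by
    refine ⟨convex_univ, fun x _ z _ a b ha hb hab => ?_⟩
    simp only [smul_eq_mul]
    refine le_ciInf fun y => ?_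
    have hx : g x ≤ term x y := ciInf_le (hbdd x) y
    have hz : g z ≤ term z y := ciInf_le (hbdd z) y
    have h1 : a * g x ≤ a * term x y := mul_le_mul_of_nonneg_left hx ha
    have h2 : b * g z ≤ b * term z y := mul_le_mul_of_nonneg_left hz hb
    have hlin : a * term x y + b * term z y = term (a • x + b • z) y := by
      rw [hterm]
      simp only [inner_add_left, real_inner_smul_left]
      linear_combination (φ y + ‖y‖ ^ 2 / 2) * hab
    linarith
  have hgcont : Continuous g := by
    rw [← continuousOn_univ]
    exact hgconc.continuousOn isOpen_univ
  -- rewrite the Hopf–Lax function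
  have hkey : (fun x : EuclideanSpace ℝ (Fin n) => ⨅ y, (φ y + ‖x - y‖ ^ 2 / 2))
      = fun x => ‖x‖^2/2 + g x := by
    funext x
    have hterms : ∀ y : EuclideanSpace ℝ (Fin n),
        φ y + ‖x - y‖ ^ 2 / 2 = ‖x‖^2/2 + term x y := by
      intro y
      have hns : ‖x - y‖^2 = ‖x‖^2 - 2 * ⟪x, y⟫ + ‖y‖^2 := norm_sub_sq_real x y
      rw [hterm]
      simp only
      linarith
    rw [hg]
    simp only
    rw [show (fun y : EuclideanSpace ℝ (Fin n) => φ y + ‖x - y‖ ^ 2 / 2)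
      = fun y => ‖x‖^2/2 + term x y from funext hterms]
    exact add_ciInf' _ _ (hbdd x)
  rw [hkey]
  exact Continuous.add ((continuous_norm.pow 2).div_const 2) hgcont
end
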